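/- If T is a k-paranormal operator for some k ≥ 1 and T^n = λI for some natural number n ≥ 1 and some complex number λ, then T is normal. -/

import Mathlib

open Finset in
lemma aux_const_of_per (n k : ℕ) (hn : 1 ≤ n) (hk : 1 ≤ k) (d : ℕ → ℝ)
    (hper : ∀ j, d (j + n) = d j)
    (hcond : ∀ j, (k : ℝ) * d j ≤ ∑ i ∈ Finset.range k, d (j + 1 + i)) :
    ∀ j, d j = d 0 := by
  have hmod : ∀ q j, d (j + q * n) = d j := by
    intro q
    induction q with
    | zero => simp
    | succ q ih =>
      intro j
      have : j + (q + 1) * n = j + q * n + n := by ring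
      rw [this, hper, ih]
  obtain ⟨m, hmmem, hmax⟩ := Finset.exists_max_image (Finset.range n) d ⟨0, Finset.mem_range.mpr (by omega)⟩
  have hub : ∀ j, d j ≤ d m := by
    intro j
    have h1 : d (j % n + (j / n) * n) = d (j % n) := hmod (j / n) (j % n)
    rw [Nat.mod_add_div'] at h1
    rw [h1]
    exact hmax _ (Finset.mem_range.mpr (Nat.mod_lt _ hn))
  obtain ⟨k', rfl⟩ : ∃ k', k = k' + 1 := ⟨k - 1, (Nat.succ_pred_eq_of_pos hk).symm⟩
  have hstep : ∀ p, d p = d m → d (p + 1) = d m := by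
    intro p hp
    have h := hcond p
    rw [Finset.sum_range_succ'] at h
    have hsum : ∑ i ∈ Finset.range k', d (p + 1 + (i + 1)) ≤ (k' : ℝ) * d m := by
      calc ∑ i ∈ Finset.range k', d (p + 1 + (i + 1)) ≤ ∑ _i ∈ Finset.range k', d m :=
            Finset.sum_le_sum fun i _ => hub _
        _ = (k' : ℝ) * d m := by simp [mul_comm]
    have h2 : ((k' : ℝ) + 1) * d m ≤ (k' : ℝ) * d m + d (p + 1) := by
      push_cast at h
      rw [hp] at h
      linarith [h, hsum]
    have := hub (p + 1)
    linarith
  have hge : ∀ j, d (m + j) = d m := by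
    intro j
    induction j with
    | zero => rfl
    | succ j ih => exact hstep (m + j) ih
  have hall : ∀ j, d j = d m := by
    intro j
    have h1 : d (j + m * n) = d j := hmod m j
    have h2 : m + (j + m * n - m) = j + m * n := by
      have : m ≤ m * n := Nat.le_mul_of_pos_right m hn
      omega
    have h3 := hge (j + m * n - m)
    rw [h2, h1] at h3
    exact h3
  intro j
  rw [hall j, ← hall 0]

theorem stmt_7 {H : Type*} [NormedAddCommGroup H] [InnerProductSpace ℂ H] [CompleteSpace H]
    (T : H →L[ℂ] H) (k : ℕ) (hk : 1 ≤ k)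
    (hpara : ∀ x : H, ‖T x‖ ^ (k + 1) ≤ ‖(T ^ (k + 1)) x‖ * ‖x‖ ^ k)
    (n : ℕ) (hn : 1 ≤ n) (lam : ℂ) (hT : T ^ n = lam • (1 : H →L[ℂ] H)) :
    ContinuousLinearMap.adjoint T * T = T * ContinuousLinearMap.adjoint T := by
  by_cases hlam : lam = 0
  · -- degenerate case : T ^ n = 0, show T = 0
    subst hlam
    rw [zero_smul] at hT
    have hT0 : T = 0 := by
      ext x
      by_contra hx
      simp only [ContinuousLinearMap.zero_apply] at hx
      have key : ∀ m : ℕ, (T ^ (1 + m * k)) x ≠ 0 := by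
        intro m
        induction m with
        | zero => simpa using hx
        | succ m ih =>
          intro h0
          have h := hpara ((T ^ (m * k)) x)
          have e1 : T ((T ^ (m * k)) x) = (T ^ (1 + m * k)) x := by
            rw [add_comm, pow_succ', ContinuousLinearMap.mul_apply]
          have e2 : (T ^ (k + 1)) ((T ^ (m * k)) x) = (T ^ (1 + (m + 1) * k)) x := by
            rw [← ContinuousLinearMap.mul_apply, ← pow_add]
            congr 2
            ring
          rw [e1, e2, h0] at h
          simp only [norm_zero, zero_mul] at h
          have hpos := pow_pos (norm_pos_iff.mpr ih) (k + 1)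
          linarith
      have hbig : T ^ (1 + n * k) = 0 := by
        have h1 : 1 + n * k = (1 + n * k - n) + n := by
          have : n ≤ n * k := Nat.le_mul_of_pos_right n hk
          omega
        rw [h1, pow_add, hT, mul_zero]
      exact key n (by rw [hbig]; rfl)
    rw [hT0]
    simp
  · -- invertible case
    have hlamnorm : (0 : ℝ) < ‖lam‖ := norm_pos_iff.mpr hlam
    set S : H →L[ℂ] H := lam⁻¹ • T ^ (n - 1) with hS
    have hnn : n - 1 + 1 = n := Nat.succ_pred_eq_of_pos hn
    have hST : S * T = 1 := by
      rw [hS, smul_mul_assoc, ← pow_succ, hnn, hT, smul_smul, inv_mul_cancel₀ hlam, one_smul]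
    have hTS : T * S = 1 := by
      rw [hS, mul_smul_comm, ← pow_succ', hnn, hT, smul_smul, inv_mul_cancel₀ hlam, one_smul]
    have hinj : ∀ y : H, T y = 0 → y = 0 := by
      intro y hy
      have h1 : (S * T) y = y := by rw [hST]; rfl
      rw [ContinuousLinearMap.mul_apply, hy, map_zero] at h1
      exact h1.symm
    have key : ∀ x : H, ‖T x‖ ^ n = ‖lam‖ * ‖x‖ ^ n := by
      intro x
      rcases eq_or_ne x 0 with rfl | hx
      · simp [zero_pow (by omega : n ≠ 0)]
      set a : ℕ → ℝ := fun j => ‖(T ^ j) x‖ with ha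
      have hapos : ∀ j, 0 < a j := by
        intro j
        induction j with
        | zero => simpa [ha] using norm_pos_iff.mpr hx
        | succ j ih =>
          have hne : (T ^ j) x ≠ 0 := by
            simp only [ha, norm_pos_iff] at ih
            exact ih
          have he : (T ^ (j + 1)) x = T ((T ^ j) x) := by
            rw [pow_succ', ContinuousLinearMap.mul_apply]
          simp only [ha, he]
          exact norm_pos_iff.mpr fun h0 => hne (hinj _ h0)
      set b : ℕ → ℝ := fun j => Real.log (a j) with hb
      set d : ℕ → ℝ := fun j => b (j + 1) - b j with hd
      have haper : ∀ j, a (j + n) = ‖lam‖ * a j := by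
        intro j
        have he : T ^ (j + n) = lam • T ^ j := by
          rw [pow_add, hT, mul_smul_comm, mul_one]
        simp only [ha]
        rw [he, ContinuousLinearMap.smul_apply, norm_smul]
      have hbper : ∀ j, b (j + n) = Real.log ‖lam‖ + b j := by
        intro j
        simp only [hb, haper j]
        rw [Real.log_mul (ne_of_gt hlamnorm) (ne_of_gt (hapos j))]
      have hdper : ∀ j, d (j + n) = d j := by
        intro j
        have h1 := hbper j
        have h2 := hbper (j + 1)
        simp only [hd]
        have he : j + n + 1 = j + 1 + n := by ring
        rw [he, h1, h2]
        ring
      have hdcond : ∀ j, (k : ℝ) * d j ≤ ∑ i ∈ Finset.range k, d (j + 1 + i) := by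
        intro j
        have htel : ∑ i ∈ Finset.range k, d (j + 1 + i) = b (j + 1 + k) - b (j + 1) := by
          exact Finset.sum_range_sub (fun i => b (j + 1 + i)) k
        rw [htel]
        have hp : a (j + 1) ^ (k + 1) ≤ a (j + 1 + k) * a j ^ k := by
          have h := hpara ((T ^ j) x)
          have e1 : T ((T ^ j) x) = (T ^ (j + 1)) x := by
            rw [pow_succ', ContinuousLinearMap.mul_apply]
          have e2 : (T ^ (k + 1)) ((T ^ j) x) = (T ^ (j + 1 + k)) x := by
            rw [← ContinuousLinearMap.mul_apply, ← pow_add]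
            congr 2
            ring
          rw [e1, e2] at h
          exact h
        have hlog := Real.log_le_log (pow_pos (hapos (j + 1)) (k + 1)) hp
        rw [Real.log_pow, Real.log_mul (ne_of_gt (hapos _)) (ne_of_gt (pow_pos (hapos j) k)),
          Real.log_pow] at hlog
        simp only [hd, hb] at *
        push_cast at hlog ⊢
        linarith
      have hdconst := aux_const_of_per n k hn hk d hdper hdcond
      have hsum : (n : ℝ) * d 0 = b n - b 0 := by
        have h1 : ∑ i ∈ Finset.range n, d i = b n - b 0 := Finset.sum_range_sub b n
        rw [← h1, Finset.sum_congr rfl fun i _ => hdconst i]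
        simp [mul_comm]
      have hbn : b n = Real.log ‖lam‖ + b 0 := by simpa using hbper 0
      have hkey : (n : ℝ) * (b 1 - b 0) = Real.log ‖lam‖ := by
        have hd0 : d 0 = b 1 - b 0 := rfl
        rw [← hd0]
        linarith [hsum]
      have hlogeq : Real.log (a 1 ^ n) = Real.log (‖lam‖ * a 0 ^ n) := by
        rw [Real.log_pow, Real.log_mul (ne_of_gt hlamnorm) (ne_of_gt (pow_pos (hapos 0) n)),
          Real.log_pow]
        simp only [hb] at hkey
        linarith
      have hpoweq : a 1 ^ n = ‖lam‖ * a 0 ^ n := by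
        have e1 := Real.exp_log (pow_pos (hapos 1) n)
        have e2 := Real.exp_log (mul_pos hlamnorm (pow_pos (hapos 0) n))
        rw [← e1, ← e2, hlogeq]
      have e1 : a 1 = ‖T x‖ := by simp [ha]
      have e0 : a 0 = ‖x‖ := by simp [ha]
      rw [← e1, ← e0, hpoweq]
    -- define c
    set c : ℝ := ‖lam‖ ^ ((n : ℝ)⁻¹) with hc
    have hcpow : c ^ n = ‖lam‖ :=
      Real.rpow_inv_natCast_pow (norm_nonneg _) (by omega)
    have hc0 : 0 ≤ c := Real.rpow_nonneg (norm_nonneg _) _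
    have hnorm : ∀ x : H, ‖T x‖ = c * ‖x‖ := by
      intro x
      have h : ‖T x‖ ^ n = (c * ‖x‖) ^ n := by
        rw [mul_pow, hcpow, key]
      exact (pow_left_inj₀ (norm_nonneg _) (by positivity) (by omega)).mp h
    have hAdj : ContinuousLinearMap.adjoint T * T = ((c : ℂ) ^ 2) • 1 := by
      have hA : ∀ x : H,
          inner ℂ ((ContinuousLinearMap.adjoint T * T - ((c : ℂ) ^ 2) • 1) x) x = (0 : ℂ) := by
        intro x
        rw [ContinuousLinearMap.sub_apply, inner_sub_left, ContinuousLinearMap.mul_apply,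
          ContinuousLinearMap.adjoint_inner_left, ContinuousLinearMap.smul_apply,
          ContinuousLinearMap.one_apply, inner_smul_left,
          inner_self_eq_norm_sq_to_K, inner_self_eq_norm_sq_to_K, hnorm x, map_pow,
          Complex.conj_ofReal]
        have hco : ∀ r : ℝ, (RCLike.ofReal r : ℂ) = (r : ℂ) := fun _ => rfl
        rw [hco, hco]
        push_cast
        ring
      have hzero : (ContinuousLinearMap.adjoint T * T - ((c : ℂ) ^ 2) • 1 : H →L[ℂ] H) = 0 := by
        have := (inner_map_self_eq_zero
          ((ContinuousLinearMap.adjoint T * T - ((c : ℂ) ^ 2) • 1 : H →L[ℂ] H) :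
            H →ₗ[ℂ] H)).mp hA
        ext x
        have hx := congrArg (fun f : H →ₗ[ℂ] H => f x) this
        simpa using hx
      have := sub_eq_zero.mp hzero
      exact this
    have hTadj : ContinuousLinearMap.adjoint T = ((c : ℂ) ^ 2) • S := by
      calc ContinuousLinearMap.adjoint T = ContinuousLinearMap.adjoint T * (T * S) := by
            rw [hTS, mul_one]
        _ = (ContinuousLinearMap.adjoint T * T) * S := by rw [mul_assoc]
        _ = ((c : ℂ) ^ 2) • S := by rw [hAdj, smul_mul_assoc, one_mul]
    rw [hAdj, hTadj, mul_smul_comm, hTS]
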